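/- arXiv:2207.12336 — 2 statements merged into one kernel-verified Lean document; each statement's English description precedes it below -/
import Mathlib

section
/- Let n ≥ 2 and 1 ≤ k ≤ (n+1)/2. The number of isomorphisms from F_k(K_{1,n}) to itself (i.e., |Aut(F_k(K_{1,n}))|) equals n! if k ≠ (n+1)/2, and equals 2·n! if k = (n+1)/2. -/
open Finset

/-- The `k`-token graph of a graph `G`. -/
def tokenGraph {V : Type*} [DecidableEq V] (G : SimpleGraph V) (k : ℕ) :
    SimpleGraph {s : Finset V // s.card = k} where
  Adj A B := ∃ a b : V, G.Adj a b ∧ symmDiff A.1 B.1 = {a, b}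
  symm := by
    constructor
    rintro A B ⟨a, b, hab, h⟩
    exact ⟨a, b, hab, by rwa [symmDiff_comm]⟩
  loopless := by
    constructor
    rintro A ⟨a, b, hab, h⟩
    rw [symmDiff_self] at h
    exact (Finset.insert_ne_empty a {b}) h.symm

/-- The star `K_{1,n}`: vertex `0` is the center, the other `n` vertices are
leaves adjacent exactly to the center. -/
def starGraph (n : ℕ) : SimpleGraph (Fin (n + 1)) where
  Adj i j := (i = 0 ∧ j ≠ 0) ∨ (j = 0 ∧ i ≠ 0)
  symm := by tauto
  loopless := by constructor; rintro i (⟨h1, h2⟩ | ⟨h1, h2⟩) <;> exact h2 h1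

namespace TokenStar

variable {n k : ℕ}

abbrev Vtx (n k : ℕ) := {s : Finset (Fin (n+1)) // s.card = k}

private lemma aux2 (A B : Vtx n k) (b : Fin (n+1)) (hb : b ≠ 0)
    (h : symmDiff A.1 B.1 = ({0, b} : Finset (Fin (n+1)))) (h0 : 0 ∈ A.1) :
    0 ∉ B.1 ∧ A.1.erase 0 ⊆ B.1 := by
  have h0B : 0 ∉ B.1 := by
    intro h0B
    have : (0 : Fin (n+1)) ∈ symmDiff A.1 B.1 := by rw [h]; simp
    rw [Finset.mem_symmDiff] at this
    tauto
  refine ⟨h0B, ?_⟩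
  intro x hx
  obtain ⟨hx0, hxA⟩ := Finset.mem_erase.1 hx
  by_contra hxB
  have hxb : x = b := by
    have : x ∈ symmDiff A.1 B.1 := Finset.mem_symmDiff.2 (Or.inl ⟨hxA, hxB⟩)
    rw [h] at this
    rcases Finset.mem_insert.1 this with h' | h'
    · exact absurd h' hx0
    · exact Finset.mem_singleton.1 h'
  subst hxb
  -- now x = b ∈ A \ B ; show B ⊆ A hence B = A, contradiction
  have hBA : B.1 ⊆ A.1 := by
    intro y hy
    by_contra hyA
    have : y ∈ symmDiff A.1 B.1 := Finset.mem_symmDiff.2 (Or.inr ⟨hy, hyA⟩)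
    rw [h] at this
    rcases Finset.mem_insert.1 this with h' | h'
    · subst h'; exact h0B hy
    · rw [Finset.mem_singleton.1 h'] at hy; exact hxB hy
  have : B.1 = A.1 := Finset.eq_of_subset_of_card_le hBA (by rw [A.2, B.2])
  rw [this] at hxB; exact hxB hxA

/-- The adjacency characterization in the token graph of a star. -/
theorem adj_iff {A B : Vtx n k} :
    (tokenGraph (starGraph n) k).Adj A B ↔
      ((0 ∈ A.1 ∧ 0 ∉ B.1 ∧ A.1.erase 0 ⊆ B.1) ∨
       (0 ∈ B.1 ∧ 0 ∉ A.1 ∧ B.1.erase 0 ⊆ A.1)) := by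
  constructor
  · rintro ⟨a, b, hab, h⟩
    have key : ∃ c : Fin (n+1), c ≠ 0 ∧ symmDiff A.1 B.1 = {0, c} := by
      rcases hab with ⟨rfl, hb0⟩ | ⟨rfl, ha0⟩
      · exact ⟨b, hb0, h⟩
      · exact ⟨a, ha0, by rw [h]; exact Finset.pair_comm a 0⟩
    obtain ⟨c, hc0, hsd⟩ := key
    have h0 : (0 : Fin (n+1)) ∈ symmDiff A.1 B.1 := by rw [hsd]; simp
    rw [Finset.mem_symmDiff] at h0
    rcases h0 with ⟨h0A, _⟩ | ⟨h0B, _⟩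
    · exact Or.inl ⟨h0A, (aux2 A B c hc0 hsd h0A).1, (aux2 A B c hc0 hsd h0A).2⟩
    · have hsd' : symmDiff B.1 A.1 = ({0, c} : Finset (Fin (n+1))) := by
        rwa [symmDiff_comm]
      exact Or.inr ⟨h0B, (aux2 B A c hc0 hsd' h0B).1, (aux2 B A c hc0 hsd' h0B).2⟩
  · have main : ∀ A B : Vtx n k, 0 ∈ A.1 → 0 ∉ B.1 → A.1.erase 0 ⊆ B.1 →
        (tokenGraph (starGraph n) k).Adj A B := by
      intro A B h0A h0B hsub
      have hAB : A.1 \ B.1 = {0} := by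
        ext x
        simp only [Finset.mem_sdiff, Finset.mem_singleton]
        constructor
        · rintro ⟨hxA, hxB⟩
          by_contra hx0
          exact hxB (hsub (Finset.mem_erase.2 ⟨hx0, hxA⟩))
        · rintro rfl; exact ⟨h0A, h0B⟩
      have hcap : B.1 ∩ A.1 = A.1.erase 0 := by
        ext x
        simp only [Finset.mem_inter, Finset.mem_erase]
        constructor
        · rintro ⟨hxB, hxA⟩
          exact ⟨fun h => h0B (h ▸ hxB), hxA⟩
        · intro hx
          exact ⟨hsub (Finset.mem_erase.2 hx), hx.2⟩
      have hk1 : 1 ≤ k := by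
        rw [← A.2]; exact Finset.card_pos.2 ⟨0, h0A⟩
      have hcard : (B.1 \ A.1).card = 1 := by
        have h1 := Finset.card_sdiff_add_card_inter B.1 A.1
        rw [hcap, Finset.card_erase_of_mem h0A, A.2, B.2] at h1
        omega
      obtain ⟨b, hb⟩ := Finset.card_eq_one.1 hcard
      have hbB : b ∈ B.1 ∧ b ∉ A.1 := by
        have : b ∈ B.1 \ A.1 := by rw [hb]; simp
        exact ⟨(Finset.mem_sdiff.1 this).1, (Finset.mem_sdiff.1 this).2⟩
      have hb0 : b ≠ 0 := fun h => h0B (h ▸ hbB.1)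
      refine ⟨0, b, Or.inl ⟨rfl, hb0⟩, ?_⟩
      rw [symmDiff_def, Finset.sup_eq_union, hAB, hb]
      ext x; simp [Finset.mem_insert]
    intro h
    rcases h with ⟨h1, h2, h3⟩ | ⟨h1, h2, h3⟩
    · exact main A B h1 h2 h3
    · exact ((tokenGraph (starGraph n) k).adj_symm (main B A h1 h2 h3))


/-! ### Pure combinatorial lemmas -/

section Combinatorics

variable {α : Type*} [DecidableEq α]

lemma union_inter_card {S S' : Finset α} {m : ℕ} (hS : S.card = m) (hS' : S'.card = m)
    (hne : S ≠ S') (h : (S ∪ S').card ≤ m + 1) :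
    (S ∪ S').card = m + 1 ∧ (S ∩ S').card + 1 = m := by
  have hx : ∃ x ∈ S', x ∉ S := by
    by_contra hc
    push_neg at hc
    exact hne (Finset.eq_of_subset_of_card_le hc (by omega)).symm
  obtain ⟨x, hxS', hxS⟩ := hx
  have h1 : m + 1 ≤ (S ∪ S').card := by
    have : insert x S ⊆ S ∪ S' := by
      intro y hy
      rcases Finset.mem_insert.1 hy with rfl | hy
      · exact Finset.mem_union_right _ hxS'
      · exact Finset.mem_union_left _ hy
    calc m + 1 = (insert x S).card := by rw [Finset.card_insert_of_notMem hxS, hS]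
    _ ≤ _ := Finset.card_le_card this
  have h2 := Finset.card_inter_add_card_union S S'
  omega

lemma union_ge_of_ne {S S' : Finset α} {m : ℕ} (hS : S.card = m) (hS' : S'.card = m)
    (hne : S ≠ S') : m + 1 ≤ (S ∪ S').card := by
  have hx : ∃ x ∈ S', x ∉ S := by
    by_contra hc
    push_neg at hc
    exact hne (Finset.eq_of_subset_of_card_le hc (by omega)).symm
  obtain ⟨x, hxS', hxS⟩ := hx
  have : insert x S ⊆ S ∪ S' := by
    intro y hy
    rcases Finset.mem_insert.1 hy with rfl | hy
    · exact Finset.mem_union_right _ hxS'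
    · exact Finset.mem_union_left _ hy
  calc m + 1 = (insert x S).card := by rw [Finset.card_insert_of_notMem hxS, hS]
  _ ≤ _ := Finset.card_le_card this

/-- The sunflower trichotomy: three m-sets, pairwise distinct, with pairwise unions of
size ≤ m+1, but total union > m+1, have all pairwise intersections equal. -/
lemma sunflower_triple {S₁ S₂ S₃ : Finset α} {m : ℕ}
    (h1 : S₁.card = m) (h2 : S₂.card = m) (h3 : S₃.card = m)
    (h12 : S₁ ≠ S₂) (h13 : S₁ ≠ S₃) (h23 : S₂ ≠ S₃)
    (u12 : (S₁ ∪ S₂).card ≤ m + 1) (u13 : (S₁ ∪ S₃).card ≤ m + 1)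
    (u23 : (S₂ ∪ S₃).card ≤ m + 1)
    (hbig : ¬ (S₁ ∪ S₂ ∪ S₃).card ≤ m + 1) :
    S₁ ∩ S₂ = S₁ ∩ S₃ ∧ S₁ ∩ S₂ = S₂ ∩ S₃ := by
  have hx : ∃ x ∈ S₃, x ∉ S₁ ∪ S₂ := by
    by_contra hc
    push_neg at hc
    have : S₁ ∪ S₂ ∪ S₃ = S₁ ∪ S₂ := by
      apply Finset.Subset.antisymm
      · intro y hy
        rcases Finset.mem_union.1 hy with hy | hy
        · exact hy
        · exact hc y hy
      · exact Finset.subset_union_left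
    rw [this] at hbig
    exact hbig u12
  obtain ⟨x, hx3, hx12⟩ := hx
  have hx1 : x ∉ S₁ := fun h => hx12 (Finset.mem_union_left _ h)
  have hx2 : x ∉ S₂ := fun h => hx12 (Finset.mem_union_right _ h)
  -- S₁ ∩ S₃ = S₃.erase x and S₂ ∩ S₃ = S₃.erase x
  have key : ∀ S : Finset α, S.card = m → S ≠ S₃ → x ∉ S → (S ∪ S₃).card ≤ m + 1 →
      S ∩ S₃ = S₃.erase x := by
    intro S hS hSne hxS hu
    have hic := (union_inter_card hS h3 hSne hu).2
    apply Finset.eq_of_subset_of_card_le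
    · intro y hy
      obtain ⟨hyS, hyS₃⟩ := Finset.mem_inter.1 hy
      exact Finset.mem_erase.2 ⟨fun h => hxS (h ▸ hyS), hyS₃⟩
    · rw [Finset.card_erase_of_mem hx3, h3]
      omega
  have k13 := key S₁ h1 h13 hx1 u13
  have k23 := key S₂ h2 h23 hx2 u23
  -- S₃.erase x ⊆ S₁ ∩ S₂ and cards agree
  have hsub : S₃.erase x ⊆ S₁ ∩ S₂ := by
    intro y hy
    have hy1 : y ∈ S₁ := (Finset.mem_inter.1 (k13 ▸ hy)).1
    have hy2 : y ∈ S₂ := (Finset.mem_inter.1 (k23 ▸ hy)).1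
    exact Finset.mem_inter.2 ⟨hy1, hy2⟩
  have h12c := (union_inter_card h1 h2 h12 u12).2
  have : S₃.erase x = S₁ ∩ S₂ := by
    apply Finset.eq_of_subset_of_card_le hsub
    rw [Finset.card_erase_of_mem hx3, h3]
    omega
  exact ⟨by rw [← this, k13], by rw [← this, k23]⟩

/-- If a symmetric pair-function is locally constant on triples from `s`, it is constant. -/
lemma pair_fn_const {β : Type*} {s : Finset α} (I : α → α → β)
    (hsymm : ∀ a b, I a b = I b a)
    (htri : ∀ a ∈ s, ∀ b ∈ s, ∀ c ∈ s, a ≠ b → a ≠ c → b ≠ c → I a b = I a c) :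
    ∀ a ∈ s, ∀ b ∈ s, ∀ a' ∈ s, ∀ b' ∈ s, a ≠ b → a' ≠ b' → I a b = I a' b' := by
  intro a ha b hb a' ha' b' hb' hab ha'b'
  by_cases haa' : a = a'
  · subst haa'
    by_cases hbb' : b = b'
    · subst hbb'; rfl
    · exact htri a ha b hb b' hb' hab ha'b' hbb'
  · by_cases hba' : b = a'
    · by_cases hab' : a = b'
      · rw [hab', hba']; exact hsymm b' a'
      · have hbb' : b ≠ b' := by rw [hba']; exact ha'b'
        calc I a b = I a b' := htri a ha b hb b' hb' hab hab' hbb'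
        _ = I b' a := hsymm a b'
        _ = I b' a' := htri b' hb' a ha a' ha' (fun h => hab' h.symm) (fun h => ha'b' h.symm) haa'
        _ = I a' b' := hsymm b' a'
    · calc I a b = I b a := hsymm a b
      _ = I b a' := htri b hb a ha a' ha' (fun h => hab h.symm) hba' haa'
      _ = I a' b := hsymm b a'
      _ = I a' b' := by
          by_cases hbb' : b = b'
          · subst hbb'; rfl
          · exact htri a' ha' b hb b' hb' (fun h => hba' h.symm) ha'b' hbb'

end Combinatorics


/-! ### Levels and compatible pairs -/

def Lev (n j : ℕ) (s : Finset (Fin (n+1))) : Prop := s.card = j ∧ 0 ∉ s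

/-- A compatible pair of bijections on levels `j` and `j+1` of subsets of the leaves. -/
structure Pair (n j : ℕ) where
  f : Finset (Fin (n+1)) → Finset (Fin (n+1))
  f' : Finset (Fin (n+1)) → Finset (Fin (n+1))
  g : Finset (Fin (n+1)) → Finset (Fin (n+1))
  g' : Finset (Fin (n+1)) → Finset (Fin (n+1))
  mapsf : ∀ S, Lev n j S → Lev n j (f S)
  mapsf' : ∀ S, Lev n j S → Lev n j (f' S)
  mapsg : ∀ T, Lev n (j+1) T → Lev n (j+1) (g T)
  mapsg' : ∀ T, Lev n (j+1) T → Lev n (j+1) (g' T)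
  invf : ∀ S, Lev n j S → f' (f S) = S
  invf' : ∀ S, Lev n j S → f (f' S) = S
  invg : ∀ T, Lev n (j+1) T → g' (g T) = T
  invg' : ∀ T, Lev n (j+1) T → g (g' T) = T
  compat : ∀ R S, Lev n j R → Lev n (j+1) S → (R ⊆ S ↔ f R ⊆ g S)

variable {j : ℕ}

lemma Pair.compat' (P : Pair n j) :
    ∀ R S, Lev n j R → Lev n (j+1) S → (R ⊆ S ↔ P.f' R ⊆ P.g' S) := by
  intro R S hR hS
  have := P.compat (P.f' R) (P.g' S) (P.mapsf' R hR) (P.mapsg' S hS)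
  rw [P.invf' R hR, P.invg' S hS] at this
  exact this.symm

def Pair.symm (P : Pair n j) : Pair n j where
  f := P.f'
  f' := P.f
  g := P.g'
  g' := P.g
  mapsf := P.mapsf'
  mapsf' := P.mapsf
  mapsg := P.mapsg'
  mapsg' := P.mapsg
  invf := P.invf'
  invf' := P.invf
  invg := P.invg'
  invg' := P.invg
  compat := P.compat'

lemma eq_singleton_of_card_one {α : Type*} [DecidableEq α] {s : Finset α} (h : s.card = 1)
    {x : α} (hx : x ∈ s) : s = {x} := by
  obtain ⟨c, hc⟩ := Finset.card_eq_one.1 h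
  subst hc
  rw [Finset.mem_singleton] at hx
  rw [hx]

lemma Pair.finj (P : Pair n j) {S S'} (hS : Lev n j S) (hS' : Lev n j S')
    (h : P.f S = P.f S') : S = S' := by
  have := P.invf S hS
  rw [h, P.invf S' hS'] at this
  exact this.symm

/-- transfer of "common upper cover" through a pair. -/
lemma Pair.transfer2 (P : Pair n j) {S S'} (hS : Lev n j S) (hS' : Lev n j S') :
    (∃ T, Lev n (j+1) T ∧ S ⊆ T ∧ S' ⊆ T) ↔
      (∃ T, Lev n (j+1) T ∧ P.f S ⊆ T ∧ P.f S' ⊆ T) := by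
  constructor
  · rintro ⟨T, hT, h1, h2⟩
    exact ⟨P.g T, P.mapsg T hT, (P.compat S T hS hT).1 h1, (P.compat S' T hS' hT).1 h2⟩
  · rintro ⟨T, hT, h1, h2⟩
    refine ⟨P.g' T, P.mapsg' T hT, ?_, ?_⟩
    · rw [P.compat S (P.g' T) hS (P.mapsg' T hT), P.invg' T hT]; exact h1
    · rw [P.compat S' (P.g' T) hS' (P.mapsg' T hT), P.invg' T hT]; exact h2

lemma Pair.transfer3 (P : Pair n j) {S₁ S₂ S₃} (h1 : Lev n j S₁) (h2 : Lev n j S₂)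
    (h3 : Lev n j S₃) :
    (∃ T, Lev n (j+1) T ∧ S₁ ⊆ T ∧ S₂ ⊆ T ∧ S₃ ⊆ T) ↔
      (∃ T, Lev n (j+1) T ∧ P.f S₁ ⊆ T ∧ P.f S₂ ⊆ T ∧ P.f S₃ ⊆ T) := by
  constructor
  · rintro ⟨T, hT, ha, hb, hc⟩
    exact ⟨P.g T, P.mapsg T hT, (P.compat _ T h1 hT).1 ha, (P.compat _ T h2 hT).1 hb,
      (P.compat _ T h3 hT).1 hc⟩
  · rintro ⟨T, hT, ha, hb, hc⟩
    refine ⟨P.g' T, P.mapsg' T hT, ?_, ?_, ?_⟩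
    · rw [P.compat _ (P.g' T) h1 (P.mapsg' T hT), P.invg' T hT]; exact ha
    · rw [P.compat _ (P.g' T) h2 (P.mapsg' T hT), P.invg' T hT]; exact hb
    · rw [P.compat _ (P.g' T) h3 (P.mapsg' T hT), P.invg' T hT]; exact hc

/-- combinatorial characterization of the existence of a common upper cover (two sets). -/
lemma common2_iff {m : ℕ} {S S' : Finset (Fin (n+1))} (hS : Lev n m S) (hS' : Lev n m S')
    (hne : S ≠ S') :
    (∃ T, Lev n (m+1) T ∧ S ⊆ T ∧ S' ⊆ T) ↔ (S ∪ S').card ≤ m + 1 := by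
  constructor
  · rintro ⟨T, hT, h1, h2⟩
    have : S ∪ S' ⊆ T := Finset.union_subset h1 h2
    calc (S ∪ S').card ≤ T.card := Finset.card_le_card this
    _ = m + 1 := hT.1
  · intro h
    have := union_inter_card hS.1 hS'.1 hne h
    exact ⟨S ∪ S', ⟨this.1, by simp [hS.2, hS'.2]⟩, Finset.subset_union_left,
      Finset.subset_union_right⟩

/-- combinatorial characterization of the existence of a common upper cover (three sets). -/
lemma common3_iff {m : ℕ} (hmn : m + 1 ≤ n) {S₁ S₂ S₃ : Finset (Fin (n+1))}
    (h1 : Lev n m S₁) (h2 : Lev n m S₂) (h3 : Lev n m S₃) :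
    (∃ T, Lev n (m+1) T ∧ S₁ ⊆ T ∧ S₂ ⊆ T ∧ S₃ ⊆ T) ↔ (S₁ ∪ S₂ ∪ S₃).card ≤ m + 1 := by
  constructor
  · rintro ⟨T, hT, ha, hb, hc⟩
    have : S₁ ∪ S₂ ∪ S₃ ⊆ T := Finset.union_subset (Finset.union_subset ha hb) hc
    calc (S₁ ∪ S₂ ∪ S₃).card ≤ T.card := Finset.card_le_card this
    _ = m + 1 := hT.1
  · intro h
    have hsub : S₁ ∪ S₂ ∪ S₃ ⊆ (Finset.univ : Finset (Fin (n+1))).erase 0 := by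
      intro x hx
      refine Finset.mem_erase.2 ⟨?_, Finset.mem_univ x⟩
      rintro rfl
      rcases Finset.mem_union.1 hx with hx | hx
      · rcases Finset.mem_union.1 hx with hx | hx
        · exact h1.2 hx
        · exact h2.2 hx
      · exact h3.2 hx
    have hcard : m + 1 ≤ ((Finset.univ : Finset (Fin (n+1))).erase 0).card := by
      rw [Finset.card_erase_of_mem (Finset.mem_univ 0), Finset.card_univ, Fintype.card_fin]
      omega
    obtain ⟨T, hT1, hT2, hT3⟩ := Finset.exists_subsuperset_card_eq hsub h hcard
    refine ⟨T, ⟨hT3, fun h0 => (Finset.mem_erase.1 (hT2 h0)).1 rfl⟩, ?_, ?_, ?_⟩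
    · exact fun x hx => hT1 (Finset.mem_union_left _ (Finset.mem_union_left _ hx))
    · exact fun x hx => hT1 (Finset.mem_union_left _ (Finset.mem_union_right _ hx))
    · exact fun x hx => hT1 (Finset.mem_union_right _ hx)


/-! ### The downward construction -/

section Down

lemma mem_cpl {R : Finset (Fin (n+1))} {a : Fin (n+1)} :
    a ∈ (insert 0 R)ᶜ ↔ a ≠ 0 ∧ a ∉ R := by
  simp [Finset.mem_compl]

lemma card_cpl {j : ℕ} {R : Finset (Fin (n+1))} (hR : Lev n j R) :
    ((insert 0 R)ᶜ).card = n - j := by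
  rw [Finset.card_compl, Finset.card_insert_of_notMem hR.2, hR.1, Fintype.card_fin]
  omega

lemma ins_lev {j : ℕ} {R : Finset (Fin (n+1))} {a : Fin (n+1)} (hR : Lev n j R)
    (ha : a ∈ (insert 0 R)ᶜ) : Lev n (j+1) (insert a R) := by
  obtain ⟨ha0, haR⟩ := mem_cpl.1 ha
  refine ⟨by rw [Finset.card_insert_of_notMem haR, hR.1], ?_⟩
  intro h
  rcases Finset.mem_insert.1 h with h | h
  · exact ha0 h.symm
  · exact hR.2 h

lemma exists_insert_of_cover {j : ℕ} {W Z : Finset (Fin (n+1))} (hsub : W ⊆ Z)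
    (hW : W.card = j) (hZ : Z.card = j + 1) : ∃ x, x ∉ W ∧ Z = insert x W := by
  have hcard : (Z \ W).card = 1 := by
    rw [Finset.card_sdiff_of_subset hsub, hW, hZ]
    omega
  obtain ⟨x, hx⟩ := Finset.card_eq_one.1 hcard
  have hxZ : x ∈ Z ∧ x ∉ W := by
    have : x ∈ Z \ W := by rw [hx]; simp
    exact ⟨(Finset.mem_sdiff.1 this).1, (Finset.mem_sdiff.1 this).2⟩
  refine ⟨x, hxZ.2, ?_⟩
  apply Finset.Subset.antisymm
  · intro z hz
    by_cases hzW : z ∈ W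
    · exact Finset.mem_insert_of_mem hzW
    · have : z ∈ Z \ W := Finset.mem_sdiff.2 ⟨hz, hzW⟩
      rw [hx] at this
      exact Finset.mem_insert.2 (Or.inl (Finset.mem_singleton.1 this))
  · intro z hz
    rcases Finset.mem_insert.1 hz with rfl | hz
    · exact hxZ.1
    · exact hsub hz

variable {j : ℕ} (P : Pair n (j+1))

lemma f_ins_injOn {R : Finset (Fin (n+1))} (hR : Lev n j R) {a b : Fin (n+1)}
    (ha : a ∈ (insert 0 R)ᶜ) (hb : b ∈ (insert 0 R)ᶜ)
    (h : P.f (insert a R) = P.f (insert b R)) : a = b := by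
  have := P.finj (ins_lev hR ha) (ins_lev hR hb) h
  have ha' : a ∈ insert b R := this ▸ Finset.mem_insert_self a R
  rcases Finset.mem_insert.1 ha' with h | h
  · exact h
  · exact absurd h (mem_cpl.1 ha).2

lemma image_union_card {R : Finset (Fin (n+1))} (hR : Lev n j R) {a b : Fin (n+1)}
    (ha : a ∈ (insert 0 R)ᶜ) (hb : b ∈ (insert 0 R)ᶜ) (hab : a ≠ b) :
    (P.f (insert a R) ∪ P.f (insert b R)).card ≤ j + 2 := by
  have hup : ∃ T, Lev n (j+2) T ∧ insert a R ⊆ T ∧ insert b R ⊆ T := by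
    rw [common2_iff (ins_lev hR ha) (ins_lev hR hb) (fun h => hab (by
      have ha' : a ∈ insert b R := h ▸ Finset.mem_insert_self a R
      rcases Finset.mem_insert.1 ha' with h' | h'
      · exact h'
      · exact absurd h' (mem_cpl.1 ha).2))]
    have : insert a R ∪ insert b R = insert a (insert b R) := by
      ext x; simp [Finset.mem_insert, Finset.mem_union]; tauto
    rw [this, Finset.card_insert_of_notMem, Finset.card_insert_of_notMem (mem_cpl.1 hb).2,
      hR.1]
    intro h
    rcases Finset.mem_insert.1 h with h' | h'
    · exact hab h'
    · exact (mem_cpl.1 ha).2 h'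
  obtain ⟨T, hT, h1, h2⟩ := (P.transfer2 (ins_lev hR ha) (ins_lev hR hb)).1 hup
  calc (P.f (insert a R) ∪ P.f (insert b R)).card ≤ T.card :=
    Finset.card_le_card (Finset.union_subset h1 h2)
  _ = j + 2 := hT.1

lemma image_inter_card {R : Finset (Fin (n+1))} (hR : Lev n j R) {a b : Fin (n+1)}
    (ha : a ∈ (insert 0 R)ᶜ) (hb : b ∈ (insert 0 R)ᶜ) (hab : a ≠ b) :
    (P.f (insert a R) ∩ P.f (insert b R)).card = j := by
  have hne : P.f (insert a R) ≠ P.f (insert b R) := fun h => hab (f_ins_injOn P hR ha hb h)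
  have := union_inter_card (P.mapsf _ (ins_lev hR ha)).1 (P.mapsf _ (ins_lev hR hb)).1 hne
    (image_union_card P hR ha hb hab)
  omega

lemma no_common3 (hn : j + 3 ≤ n) {R : Finset (Fin (n+1))} (hR : Lev n j R)
    {a b c : Fin (n+1)} (ha : a ∈ (insert 0 R)ᶜ) (hb : b ∈ (insert 0 R)ᶜ)
    (hc : c ∈ (insert 0 R)ᶜ) (hab : a ≠ b) (hac : a ≠ c) (hbc : b ≠ c) :
    ¬ (P.f (insert a R) ∪ P.f (insert b R) ∪ P.f (insert c R)).card ≤ j + 2 := by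
  intro hcard
  have himg : ∃ T, Lev n (j+2) T ∧ P.f (insert a R) ⊆ T ∧ P.f (insert b R) ⊆ T ∧
      P.f (insert c R) ⊆ T := by
    rw [← common3_iff (by omega) (P.mapsf _ (ins_lev hR ha)) (P.mapsf _ (ins_lev hR hb))
      (P.mapsf _ (ins_lev hR hc))] at hcard
    exact hcard
  obtain ⟨T, hT, h1, h2, h3⟩ := (P.transfer3 (ins_lev hR ha) (ins_lev hR hb)
    (ins_lev hR hc)).2 himg
  -- but insert a R ∪ insert b R ∪ insert c R has card j+3 > j+2
  have hsub : insert a (insert b (insert c R)) ⊆ T := by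
    intro x hx
    rcases Finset.mem_insert.1 hx with rfl | hx
    · exact h1 (Finset.mem_insert_self _ _)
    · rcases Finset.mem_insert.1 hx with rfl | hx
      · exact h2 (Finset.mem_insert_self _ _)
      · rcases Finset.mem_insert.1 hx with rfl | hx
        · exact h3 (Finset.mem_insert_self _ _)
        · exact h1 (Finset.mem_insert_of_mem hx)
  have hcard2 : j + 3 ≤ T.card := by
    have h1' : (insert a (insert b (insert c R))).card = j + 3 := by
      rw [Finset.card_insert_of_notMem, Finset.card_insert_of_notMem,
        Finset.card_insert_of_notMem (mem_cpl.1 hc).2, hR.1]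
      · intro h
        rcases Finset.mem_insert.1 h with h' | h'
        · exact hbc h'
        · exact (mem_cpl.1 hb).2 h'
      · intro h
        rcases Finset.mem_insert.1 h with h' | h'
        · exact hab h'
        · rcases Finset.mem_insert.1 h' with h'' | h''
          · exact hac h''
          · exact (mem_cpl.1 ha).2 h''
    rw [← h1']
    exact Finset.card_le_card hsub
  rw [hT.1] at hcard2
  omega

/-- The intersections of images of two distinct covers of `R` are all equal. -/
lemma inter_const (hn : j + 3 ≤ n) {R : Finset (Fin (n+1))} (hR : Lev n j R) :
    ∀ a ∈ (insert 0 R)ᶜ, ∀ b ∈ (insert 0 R)ᶜ, ∀ a' ∈ (insert 0 R)ᶜ, ∀ b' ∈ (insert 0 R)ᶜ,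
      a ≠ b → a' ≠ b' →
      P.f (insert a R) ∩ P.f (insert b R) = P.f (insert a' R) ∩ P.f (insert b' R) := by
  apply pair_fn_const (fun a b => P.f (insert a R) ∩ P.f (insert b R))
    (fun a b => Finset.inter_comm _ _)
  intro a ha b hb c hc hab hac hbc
  have hneab : P.f (insert a R) ≠ P.f (insert b R) := fun h => hab (f_ins_injOn P hR ha hb h)
  have hneac : P.f (insert a R) ≠ P.f (insert c R) := fun h => hac (f_ins_injOn P hR ha hc h)
  have hnebc : P.f (insert b R) ≠ P.f (insert c R) := fun h => hbc (f_ins_injOn P hR hb hc h)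
  exact (sunflower_triple (P.mapsf _ (ins_lev hR ha)).1 (P.mapsf _ (ins_lev hR hb)).1
    (P.mapsf _ (ins_lev hR hc)).1 hneab hneac hnebc
    (image_union_card P hR ha hb hab) (image_union_card P hR ha hc hac)
    (image_union_card P hR hb hc hbc) (no_common3 P hn hR ha hb hc hab hac hbc)).1

/-- the induced map one level down -/
def dfun (R : Finset (Fin (n+1))) : Finset (Fin (n+1)) :=
  ((insert 0 R)ᶜ).inf (fun a => P.f (insert a R))

lemma exists_two (hn : j + 3 ≤ n) {R : Finset (Fin (n+1))} (hR : Lev n j R) :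
    ∃ a ∈ (insert 0 R)ᶜ, ∃ b ∈ (insert 0 R)ᶜ, a ≠ b := by
  have : 1 < ((insert 0 R)ᶜ).card := by rw [card_cpl hR]; omega
  exact Finset.one_lt_card.1 this

lemma dfun_eq (hn : j + 3 ≤ n) {R : Finset (Fin (n+1))} (hR : Lev n j R) {a b : Fin (n+1)}
    (ha : a ∈ (insert 0 R)ᶜ) (hb : b ∈ (insert 0 R)ᶜ) (hab : a ≠ b) :
    dfun P R = P.f (insert a R) ∩ P.f (insert b R) := by
  apply le_antisymm
  · exact le_inf (Finset.inf_le ha) (Finset.inf_le hb)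
  · apply Finset.le_inf
    intro c hc
    by_cases hca : c = a
    · subst hca; exact inf_le_left
    · by_cases hcb : c = b
      · subst hcb; exact inf_le_right
      · have := inter_const P hn hR a ha b hb a ha c hc hab (fun h => hca h.symm)
        rw [this]
        exact inf_le_right

lemma dfun_lev (hn : j + 3 ≤ n) {R : Finset (Fin (n+1))} (hR : Lev n j R) :
    Lev n j (dfun P R) := by
  obtain ⟨a, ha, b, hb, hab⟩ := exists_two hn hR
  rw [dfun_eq P hn hR ha hb hab]
  refine ⟨image_inter_card P hR ha hb hab, ?_⟩
  intro h0
  exact (P.mapsf _ (ins_lev hR ha)).2 (Finset.mem_inter.1 h0).1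

lemma dfun_subset {R : Finset (Fin (n+1))} {a : Fin (n+1)} (ha : a ∈ (insert 0 R)ᶜ) :
    dfun P R ⊆ P.f (insert a R) :=
  Finset.le_iff_subset.1 (Finset.inf_le ha)

lemma subset_dcompat (hn : j + 3 ≤ n) {R S : Finset (Fin (n+1))} (hR : Lev n j R)
    (hS : Lev n (j+1) S) (hRS : R ⊆ S) : dfun P R ⊆ P.f S := by
  obtain ⟨s, hsR, rfl⟩ := exists_insert_of_cover hRS hR.1 hS.1
  have hs : s ∈ (insert 0 R)ᶜ := mem_cpl.2 ⟨fun h => hS.2 (h ▸ Finset.mem_insert_self s R), hsR⟩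
  exact dfun_subset P hs

/-- Every level-(j+1) superset of `dfun P R` is the image of a cover of `R`. -/
lemma sup_classify (hn : j + 3 ≤ n) {R : Finset (Fin (n+1))} (hR : Lev n j R)
    {Z : Finset (Fin (n+1))} (hZ : Lev n (j+1) Z) (hsub : dfun P R ⊆ Z) :
    ∃ a ∈ (insert 0 R)ᶜ, Z = P.f (insert a R) := by
  set W := dfun P R with hW
  have hWlev : Lev n j W := dfun_lev P hn hR
  set A := ((insert 0 R)ᶜ).image (fun a => P.f (insert a R)) with hA
  set BB := ((insert 0 W)ᶜ).image (fun x => insert x W) with hBB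
  have hcardA : A.card = n - j := by
    rw [hA, Finset.card_image_of_injOn, card_cpl hR]
    intro a ha b hb h
    exact f_ins_injOn P hR ha hb h
  have hAB : A ⊆ BB := by
    intro Z' hZ'
    obtain ⟨a, ha, rfl⟩ := Finset.mem_image.1 hZ'
    have hlev : Lev n (j+1) (P.f (insert a R)) := P.mapsf _ (ins_lev hR ha)
    obtain ⟨x, hxW, hxeq⟩ := exists_insert_of_cover (dfun_subset P ha) hWlev.1 hlev.1
    refine Finset.mem_image.2 ⟨x, mem_cpl.2 ⟨?_, hxW⟩, hxeq.symm⟩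
    intro h0
    exact hlev.2 (h0 ▸ hxeq ▸ Finset.mem_insert_self x W)
  have hcardBB : BB.card ≤ n - j := by
    calc BB.card ≤ ((insert 0 W)ᶜ).card := Finset.card_image_le
    _ = n - j := card_cpl hWlev
  have hABeq : A = BB := Finset.eq_of_subset_of_card_le hAB (by omega)
  -- now classify Z
  obtain ⟨x, hxW, hxeq⟩ := exists_insert_of_cover hsub hWlev.1 hZ.1
  have hZBB : Z ∈ BB := by
    refine Finset.mem_image.2 ⟨x, mem_cpl.2 ⟨?_, hxW⟩, hxeq.symm⟩
    intro h0
    exact hZ.2 (h0 ▸ hxeq ▸ Finset.mem_insert_self x W)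
  rw [← hABeq] at hZBB
  obtain ⟨a, ha, haeq⟩ := Finset.mem_image.1 hZBB
  exact ⟨a, ha, haeq.symm⟩

lemma dfun_compat (hn : j + 3 ≤ n) {R S : Finset (Fin (n+1))} (hR : Lev n j R)
    (hS : Lev n (j+1) S) : R ⊆ S ↔ dfun P R ⊆ P.f S := by
  constructor
  · exact subset_dcompat P hn hR hS
  · intro h
    obtain ⟨a, ha, haeq⟩ := sup_classify P hn hR (P.mapsf S hS) h
    have := P.finj hS (ins_lev hR ha) haeq
    rw [this]
    exact Finset.subset_insert a R

lemma dfun_inv (hn : j + 3 ≤ n) {R : Finset (Fin (n+1))} (hR : Lev n j R) :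
    dfun P.symm (dfun P R) = R := by
  set W := dfun P R with hW
  have hWlev : Lev n j W := dfun_lev P hn hR
  have hsub : R ⊆ dfun P.symm W := by
    apply Finset.le_iff_subset.1
    apply Finset.le_inf
    intro x hx
    have hlev : Lev n (j+1) (insert x W) := ins_lev hWlev hx
    obtain ⟨a, ha, haeq⟩ := sup_classify P hn hR hlev (Finset.subset_insert x W)
    have : P.symm.f (insert x W) = insert a R := by
      show P.f' (insert x W) = insert a R
      rw [haeq, P.invf _ (ins_lev hR ha)]
    rw [Finset.le_iff_subset, this]
    exact Finset.subset_insert a R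
  have hlev2 : Lev n j (dfun P.symm W) := dfun_lev P.symm hn hWlev
  exact (Finset.eq_of_subset_of_card_le hsub (by rw [hlev2.1, hR.1])).symm

/-- The downward step: a compatible pair at levels `(j+1, j+2)` induces one at `(j, j+1)`,
whose upper map is the lower map of the original pair. -/
def DOWN (hn : j + 3 ≤ n) : Pair n j where
  f := dfun P
  f' := dfun P.symm
  g := P.f
  g' := P.f'
  mapsf := fun S hS => dfun_lev P hn hS
  mapsf' := fun S hS => dfun_lev P.symm hn hS
  mapsg := P.mapsf
  mapsg' := P.mapsf'
  invf := fun S hS => dfun_inv P hn hS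
  invf' := fun S hS => dfun_inv P.symm hn hS
  invg := P.invf
  invg' := P.invf'
  compat := fun R S hR hS => dfun_compat P hn hR hS

end Down


/-! ### The main classification of compatible pairs -/

theorem pair_is_perm {n : ℕ} : ∀ (j : ℕ), 2*(j+1) ≤ n+1 → ∀ (P : Pair n j),
    ∃ σ : Equiv.Perm (Fin (n+1)), σ 0 = 0 ∧ (∀ S, Lev n j S → P.f S = S.image σ) ∧
      (∀ T, Lev n (j+1) T → P.g T = T.image σ) := by
  intro j
  induction j with
  | zero =>
    intro _ P
    have hsing : ∀ x : Fin (n+1), x ≠ 0 → Lev n 1 ({x} : Finset (Fin (n+1))) := by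
      intro x hx
      exact ⟨Finset.card_singleton x, by simp [hx.symm]⟩
    have hne : ∀ x : Fin (n+1), x ≠ 0 → (P.g {x}).Nonempty := by
      intro x hx
      rw [← Finset.card_pos, (P.mapsg _ (hsing x hx)).1]
      omega
    have hne' : ∀ x : Fin (n+1), x ≠ 0 → (P.g' {x}).Nonempty := by
      intro x hx
      rw [← Finset.card_pos, (P.mapsg' _ (hsing x hx)).1]
      omega
    set u := fun x : Fin (n+1) => if h : x = 0 then 0 else (P.g {x}).min' (hne x h) with hu
    set v := fun x : Fin (n+1) => if h : x = 0 then 0 else (P.g' {x}).min' (hne' x h) with hv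
    have hgu : ∀ x : Fin (n+1), x ≠ 0 → P.g {x} = {u x} := by
      intro x hx
      apply eq_singleton_of_card_one (P.mapsg _ (hsing x hx)).1
      rw [hu]
      simp only [dif_neg hx]
      exact Finset.min'_mem _ _
    have hg'v : ∀ x : Fin (n+1), x ≠ 0 → P.g' {x} = {v x} := by
      intro x hx
      apply eq_singleton_of_card_one (P.mapsg' _ (hsing x hx)).1
      rw [hv]
      simp only [dif_neg hx]
      exact Finset.min'_mem _ _
    have hu0 : ∀ x : Fin (n+1), x ≠ 0 → u x ≠ 0 := by
      intro x hx h0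
      have : u x ∈ P.g {x} := by rw [hgu x hx]; simp
      rw [h0] at this
      exact (P.mapsg _ (hsing x hx)).2 this
    have hv0 : ∀ x : Fin (n+1), x ≠ 0 → v x ≠ 0 := by
      intro x hx h0
      have : v x ∈ P.g' {x} := by rw [hg'v x hx]; simp
      rw [h0] at this
      exact (P.mapsg' _ (hsing x hx)).2 this
    have hvu : ∀ x : Fin (n+1), v (u x) = x := by
      intro x
      by_cases hx : x = 0
      · subst hx; simp [hu, hv]
      · have h1 : P.g' {u x} = {x} := by
          have := P.invg _ (hsing x hx)
          rw [hgu x hx] at this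
          exact this
        have h2 := hg'v (u x) (hu0 x hx)
        rw [h1] at h2
        exact (Finset.singleton_injective h2).symm
    have huv : ∀ x : Fin (n+1), u (v x) = x := by
      intro x
      by_cases hx : x = 0
      · subst hx; simp [hu, hv]
      · have h1 : P.g {v x} = {x} := by
          have := P.invg' _ (hsing x hx)
          rw [hg'v x hx] at this
          exact this
        have h2 := hgu (v x) (hv0 x hx)
        rw [h1] at h2
        exact (Finset.singleton_injective h2).symm
    refine ⟨⟨u, v, hvu, huv⟩, by simp [hu], ?_, ?_⟩
    · intro S hS
      have : S = ∅ := Finset.card_eq_zero.1 hS.1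
      subst this
      have : P.f ∅ = ∅ := Finset.card_eq_zero.1 (P.mapsf ∅ ⟨rfl, Finset.notMem_empty 0⟩).1
      simp [this]
    · intro T hT
      obtain ⟨x, hx⟩ := Finset.card_eq_one.1 hT.1
      subst hx
      have hx0 : x ≠ 0 := fun h => hT.2 (h ▸ Finset.mem_singleton_self x)
      rw [hgu x hx0, Finset.image_singleton]
      rfl
  | succ j IH =>
    intro hnn P
    have hn : j + 3 ≤ n := by omega
    obtain ⟨σ, hσ0, _, hQg⟩ := IH (by omega) (DOWN P hn)
    have hPf : ∀ T, Lev n (j+1) T → P.f T = T.image σ := hQg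
    refine ⟨σ, hσ0, hPf, ?_⟩
    intro T hT
    have hsub : T.image σ ⊆ P.g T := by
      intro y hy
      obtain ⟨t, ht, rfl⟩ := Finset.mem_image.1 hy
      obtain ⟨t', ht', htt'⟩ := Finset.exists_mem_ne (by rw [hT.1]; omega : 1 < T.card) t
      have hS : Lev n (j+1) (T.erase t') := by
        refine ⟨by rw [Finset.card_erase_of_mem ht', hT.1]; omega, ?_⟩
        intro h
        exact hT.2 (Finset.erase_subset _ _ h)
      have hsub2 : P.f (T.erase t') ⊆ P.g T :=
        (P.compat _ T hS hT).1 (Finset.erase_subset _ _)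
      apply hsub2
      rw [hPf _ hS]
      exact Finset.mem_image.2 ⟨t, Finset.mem_erase.2 ⟨fun h => htt' h.symm, ht⟩, rfl⟩
    have hcard : (P.g T).card ≤ (T.image σ).card := by
      rw [Finset.card_image_of_injective _ σ.injective, hT.1, (P.mapsg T hT).1]
    exact (Finset.eq_of_subset_of_card_le hsub hcard).symm


/-! ### Classification of layer-preserving automorphisms -/

/-- bare-function version of a token-graph automorphism -/
def Phi (φ : tokenGraph (starGraph n) k ≃g tokenGraph (starGraph n) k)
    (s : Finset (Fin (n+1))) : Finset (Fin (n+1)) :=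
  if h : s.card = k then (φ ⟨s, h⟩).1 else s

lemma Phi_spec (φ : tokenGraph (starGraph n) k ≃g tokenGraph (starGraph n) k)
    (A : Vtx n k) : Phi φ A.1 = (φ A).1 := by
  obtain ⟨s, hs⟩ := A
  exact dif_pos hs

theorem classify {j : ℕ} (hn2 : 2*(j+1) ≤ n+1)
    (φ : tokenGraph (starGraph n) (j+1) ≃g tokenGraph (starGraph n) (j+1))
    (hφ : ∀ A : Vtx n (j+1), 0 ∈ A.1 ↔ 0 ∈ (φ A).1) :
    ∃ σ : Equiv.Perm (Fin (n+1)), σ 0 = 0 ∧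
      ∀ A : Vtx n (j+1), (φ A).1 = A.1.image σ := by
  have hφ' : ∀ A : Vtx n (j+1), 0 ∈ A.1 ↔ 0 ∈ (φ.symm A).1 := by
    intro A
    have := hφ (φ.symm A)
    rw [φ.apply_symm_apply] at this
    exact this.symm
  -- building the top pair
  have hinslev : ∀ S : Finset (Fin (n+1)), Lev n j S → (insert 0 S).card = j + 1 := by
    intro S hS
    rw [Finset.card_insert_of_notMem hS.2, hS.1]
  have hmapsf : ∀ (ψ : tokenGraph (starGraph n) (j+1) ≃g tokenGraph (starGraph n) (j+1))
      (hψ : ∀ A : Vtx n (j+1), 0 ∈ A.1 ↔ 0 ∈ (ψ A).1) (S : Finset (Fin (n+1))),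
      Lev n j S → Lev n j ((Phi ψ (insert 0 S)).erase 0) := by
    intro ψ hψ S hS
    have hA : (insert 0 S).card = j + 1 := hinslev S hS
    set A : Vtx n (j+1) := ⟨insert 0 S, hA⟩ with hAdef
    have h0A : 0 ∈ (ψ A).1 := (hψ A).1 (Finset.mem_insert_self 0 S)
    rw [show Phi ψ (insert 0 S) = (ψ A).1 from Phi_spec ψ A]
    exact ⟨by rw [Finset.card_erase_of_mem h0A, (ψ A).2]; omega, Finset.notMem_erase 0 _⟩
  have hinvf : ∀ (ψ χ : tokenGraph (starGraph n) (j+1) ≃g tokenGraph (starGraph n) (j+1))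
      (hψ : ∀ A : Vtx n (j+1), 0 ∈ A.1 ↔ 0 ∈ (ψ A).1)
      (hχψ : ∀ A : Vtx n (j+1), χ (ψ A) = A) (S : Finset (Fin (n+1))), Lev n j S →
      (Phi χ (insert 0 ((Phi ψ (insert 0 S)).erase 0))).erase 0 = S := by
    intro ψ χ hψ hχψ S hS
    have hA : (insert 0 S).card = j + 1 := hinslev S hS
    set A : Vtx n (j+1) := ⟨insert 0 S, hA⟩ with hAdef
    have h0A : 0 ∈ (ψ A).1 := (hψ A).1 (Finset.mem_insert_self 0 S)
    rw [show Phi ψ (insert 0 S) = (ψ A).1 from Phi_spec ψ A,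
      Finset.insert_erase h0A, Phi_spec χ (ψ A), hχψ A]
    show (insert 0 S).erase 0 = S
    exact Finset.erase_insert hS.2
  have hmapsg : ∀ (ψ : tokenGraph (starGraph n) (j+1) ≃g tokenGraph (starGraph n) (j+1))
      (hψ : ∀ A : Vtx n (j+1), 0 ∈ A.1 ↔ 0 ∈ (ψ A).1) (T : Finset (Fin (n+1))),
      Lev n (j+1) T → Lev n (j+1) (Phi ψ T) := by
    intro ψ hψ T hT
    set B : Vtx n (j+1) := ⟨T, hT.1⟩ with hBdef
    rw [show Phi ψ T = (ψ B).1 from Phi_spec ψ B]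
    refine ⟨(ψ B).2, fun h0 => hT.2 ((hψ B).2 h0)⟩
  have hinvg : ∀ (ψ χ : tokenGraph (starGraph n) (j+1) ≃g tokenGraph (starGraph n) (j+1))
      (hχψ : ∀ A : Vtx n (j+1), χ (ψ A) = A) (T : Finset (Fin (n+1))), Lev n (j+1) T →
      Phi χ (Phi ψ T) = T := by
    intro ψ χ hχψ T hT
    set B : Vtx n (j+1) := ⟨T, hT.1⟩ with hBdef
    rw [show Phi ψ T = (ψ B).1 from Phi_spec ψ B, Phi_spec χ (ψ B), hχψ B]
  have hcompat : ∀ (ψ : tokenGraph (starGraph n) (j+1) ≃g tokenGraph (starGraph n) (j+1))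
      (hψ : ∀ A : Vtx n (j+1), 0 ∈ A.1 ↔ 0 ∈ (ψ A).1) (R S : Finset (Fin (n+1))),
      Lev n j R → Lev n (j+1) S →
      (R ⊆ S ↔ (Phi ψ (insert 0 R)).erase 0 ⊆ Phi ψ S) := by
    intro ψ hψ R S hR hS
    have hA : (insert 0 R).card = j + 1 := hinslev R hR
    set A : Vtx n (j+1) := ⟨insert 0 R, hA⟩ with hAdef
    set B : Vtx n (j+1) := ⟨S, hS.1⟩ with hBdef
    have h0A : 0 ∈ A.1 := Finset.mem_insert_self 0 R
    have h0B : 0 ∉ B.1 := hS.2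
    have h0ψA : 0 ∈ (ψ A).1 := (hψ A).1 h0A
    have h0ψB : 0 ∉ (ψ B).1 := fun h => h0B ((hψ B).2 h)
    have step1 : R ⊆ S ↔ (tokenGraph (starGraph n) (j+1)).Adj A B := by
      rw [adj_iff]
      constructor
      · intro h
        refine Or.inl ⟨h0A, h0B, ?_⟩
        rw [show A.1 = insert 0 R from rfl, Finset.erase_insert hR.2]
        exact h
      · rintro (⟨_, _, h⟩ | ⟨_, h, _⟩)
        · rw [show A.1 = insert 0 R from rfl, Finset.erase_insert hR.2] at h
          exact h
        · exact absurd h0A h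
    have step2 : (tokenGraph (starGraph n) (j+1)).Adj A B ↔
        (tokenGraph (starGraph n) (j+1)).Adj (ψ A) (ψ B) := (ψ.map_adj_iff).symm
    have step3 : (tokenGraph (starGraph n) (j+1)).Adj (ψ A) (ψ B) ↔
        ((ψ A).1.erase 0 ⊆ (ψ B).1) := by
      rw [adj_iff]
      constructor
      · rintro (⟨_, _, h⟩ | ⟨h, _, _⟩)
        · exact h
        · exact absurd h h0ψB
      · intro h
        exact Or.inl ⟨h0ψA, h0ψB, h⟩
    rw [show Phi ψ (insert 0 R) = (ψ A).1 from Phi_spec ψ A,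
      show Phi ψ S = (ψ B).1 from Phi_spec ψ B]
    exact (step1.trans step2).trans step3
  set P : Pair n j :=
    { f := fun S => (Phi φ (insert 0 S)).erase 0
      f' := fun S => (Phi φ.symm (insert 0 S)).erase 0
      g := fun T => Phi φ T
      g' := fun T => Phi φ.symm T
      mapsf := hmapsf φ hφ
      mapsf' := hmapsf φ.symm hφ'
      mapsg := hmapsg φ hφ
      mapsg' := hmapsg φ.symm hφ'
      invf := hinvf φ φ.symm hφ (fun A => φ.symm_apply_apply A)
      invf' := hinvf φ.symm φ hφ' (fun A => φ.apply_symm_apply A)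
      invg := hinvg φ φ.symm (fun A => φ.symm_apply_apply A)
      invg' := hinvg φ.symm φ (fun A => φ.apply_symm_apply A)
      compat := hcompat φ hφ } with hPdef
  obtain ⟨σ, hσ0, hf, hg⟩ := pair_is_perm j hn2 P
  refine ⟨σ, hσ0, ?_⟩
  intro A
  by_cases h0A : 0 ∈ A.1
  · have hS : Lev n j (A.1.erase 0) :=
      ⟨by rw [Finset.card_erase_of_mem h0A, A.2]; omega, Finset.notMem_erase 0 _⟩
    have hfS := hf _ hS
    rw [show P.f (A.1.erase 0) = (Phi φ (insert 0 (A.1.erase 0))).erase 0 from rfl,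
      Finset.insert_erase h0A, Phi_spec φ A] at hfS
    have h0φA : 0 ∈ (φ A).1 := (hφ A).1 h0A
    calc (φ A).1 = insert 0 ((φ A).1.erase 0) := (Finset.insert_erase h0φA).symm
    _ = insert (σ 0) ((A.1.erase 0).image σ) := by rw [hfS, hσ0]
    _ = (insert 0 (A.1.erase 0)).image σ := (Finset.image_insert σ 0 _).symm
    _ = A.1.image σ := by rw [Finset.insert_erase h0A]
  · have hT : Lev n (j+1) A.1 := ⟨A.2, h0A⟩
    have hgT := hg _ hT
    rw [show P.g A.1 = Phi φ A.1 from rfl, Phi_spec φ A] at hgT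
    exact hgT


/-! ### Connectivity and parity -/

lemma adj_of {A B : Vtx n k} (h0A : 0 ∈ A.1) (h0B : 0 ∉ B.1) (hsub : A.1.erase 0 ⊆ B.1) :
    (tokenGraph (starGraph n) k).Adj A B :=
  adj_iff.2 (Or.inl ⟨h0A, h0B, hsub⟩)

lemma adj_layers {A B : Vtx n k} (h : (tokenGraph (starGraph n) k).Adj A B) :
    (0 ∈ A.1 ↔ 0 ∉ B.1) := by
  rcases adj_iff.1 h with ⟨h1, h2, _⟩ | ⟨h1, h2, _⟩
  · exact ⟨fun _ => h2, fun _ => h1⟩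
  · exact ⟨fun h' => absurd h' h2, fun h' => absurd h1 h'⟩

lemma reachable_L0 (B : Vtx n k) (hB : 0 ∈ B.1) :
    ∀ A : Vtx n k, 0 ∈ A.1 → (tokenGraph (starGraph n) k).Reachable A B := by
  suffices H : ∀ c : ℕ, ∀ A : Vtx n k, 0 ∈ A.1 → (B.1 \ A.1).card = c →
      (tokenGraph (starGraph n) k).Reachable A B by
    intro A hA
    exact H _ A hA rfl
  intro c
  induction c using Nat.strong_induction_on with
  | _ c IH =>
    intro A hA hc
    by_cases hAB : A = B
    · subst hAB; exact SimpleGraph.Reachable.refl A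
    · have hABv : A.1 ≠ B.1 := fun h => hAB (Subtype.ext h)
      have hx : ∃ x, x ∈ B.1 ∧ x ∉ A.1 := by
        by_contra hcon
        push_neg at hcon
        exact hABv (Finset.eq_of_subset_of_card_le hcon (by rw [A.2, B.2]) ).symm
      obtain ⟨x, hxB, hxA⟩ := hx
      have hy : ∃ y, y ∈ A.1 ∧ y ∉ B.1 := by
        by_contra hcon
        push_neg at hcon
        exact hABv (Finset.eq_of_subset_of_card_le hcon (by rw [A.2, B.2]))
      obtain ⟨y, hyA, hyB⟩ := hy
      have hx0 : x ≠ 0 := fun h => hxA (h ▸ hA)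
      have hy0 : y ≠ 0 := fun h => hyB (h ▸ hB)
      have hxy : x ≠ y := fun h => hyB (h ▸ hxB)
      have hk1 : 1 ≤ k := by rw [← A.2]; exact Finset.card_pos.2 ⟨0, hA⟩
      -- A1 = A - 0 + x
      have hxe : x ∉ A.1.erase 0 := fun h => hxA (Finset.erase_subset _ _ h)
      have hcard1 : (insert x (A.1.erase 0)).card = k := by
        rw [Finset.card_insert_of_notMem hxe, Finset.card_erase_of_mem hA, A.2]
        omega
      set A1 : Vtx n k := ⟨insert x (A.1.erase 0), hcard1⟩ with hA1
      have h0A1 : 0 ∉ A1.1 := by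
        intro h
        rcases Finset.mem_insert.1 h with h | h
        · exact hx0 h.symm
        · exact (Finset.mem_erase.1 h).1 rfl
      have hadj1 : (tokenGraph (starGraph n) k).Adj A A1 :=
        adj_of hA h0A1 (Finset.subset_insert x _)
      -- A2 = A1 - y + 0
      have hyA1 : y ∈ A1.1 :=
        Finset.mem_insert_of_mem (Finset.mem_erase.2 ⟨hy0, hyA⟩)
      have hcard2 : (insert 0 (A1.1.erase y)).card = k := by
        rw [Finset.card_insert_of_notMem (fun h => h0A1 (Finset.erase_subset _ _ h)),
          Finset.card_erase_of_mem hyA1, A1.2]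
        omega
      set A2 : Vtx n k := ⟨insert 0 (A1.1.erase y), hcard2⟩ with hA2
      have h0A2 : 0 ∈ A2.1 := Finset.mem_insert_self 0 _
      have hadj2 : (tokenGraph (starGraph n) k).Adj A2 A1 := by
        apply adj_of h0A2 h0A1
        rw [Finset.erase_insert (fun h => h0A1 (Finset.erase_subset _ _ h))]
        exact Finset.erase_subset _ _
      -- measure decreases
      have hxA2 : x ∈ A2.1 := by
        refine Finset.mem_insert_of_mem (Finset.mem_erase.2 ⟨hxy, ?_⟩)
        exact Finset.mem_insert_self x _
      have hmeas : (B.1 \ A2.1).card < c := by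
        have hsub : B.1 \ A2.1 ⊆ (B.1 \ A.1).erase x := by
          intro z hz
          obtain ⟨hzB, hzA2⟩ := Finset.mem_sdiff.1 hz
          have hzx : z ≠ x := fun h => hzA2 (h ▸ hxA2)
          refine Finset.mem_erase.2 ⟨hzx, Finset.mem_sdiff.2 ⟨hzB, ?_⟩⟩
          intro hzA
          apply hzA2
          have hz0 : z ≠ 0 := fun h => hzA2 (h ▸ h0A2)
          have hzy : z ≠ y := fun h => hyB (h ▸ hzB)
          exact Finset.mem_insert_of_mem
            (Finset.mem_erase.2 ⟨hzy, Finset.mem_insert_of_mem (Finset.mem_erase.2 ⟨hz0, hzA⟩)⟩)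
        have hxBA : x ∈ B.1 \ A.1 := Finset.mem_sdiff.2 ⟨hxB, hxA⟩
        calc (B.1 \ A2.1).card ≤ ((B.1 \ A.1).erase x).card := Finset.card_le_card hsub
        _ = (B.1 \ A.1).card - 1 := Finset.card_erase_of_mem hxBA
        _ < c := by
            rw [hc]
            have : 0 < c := by
              rw [← hc]
              exact Finset.card_pos.2 ⟨x, hxBA⟩
            omega
      exact ((hadj1.reachable).trans (hadj2.reachable.symm)).trans
        (IH _ hmeas A2 h0A2 rfl)

lemma to_L0 (hk1 : 1 ≤ k) (A : Vtx n k) (h0 : 0 ∉ A.1) :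
    ∃ A' : Vtx n k, 0 ∈ A'.1 ∧ (tokenGraph (starGraph n) k).Adj A' A := by
  obtain ⟨b, hb⟩ := Finset.card_pos.1 (by rw [A.2]; omega : 0 < A.1.card)
  have hb0 : b ≠ 0 := fun h => h0 (h ▸ hb)
  have hcard : (insert 0 (A.1.erase b)).card = k := by
    rw [Finset.card_insert_of_notMem (fun h => h0 (Finset.erase_subset _ _ h)),
      Finset.card_erase_of_mem hb, A.2]
    omega
  refine ⟨⟨insert 0 (A.1.erase b), hcard⟩, Finset.mem_insert_self 0 _, ?_⟩
  apply adj_of (Finset.mem_insert_self 0 _) h0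
  rw [Finset.erase_insert (fun h => h0 (Finset.erase_subset _ _ h))]
  exact Finset.erase_subset _ _

lemma preconn (hk1 : 1 ≤ k) : (tokenGraph (starGraph n) k).Preconnected := by
  have lift : ∀ A : Vtx n k, ∃ A' : Vtx n k, 0 ∈ A'.1 ∧
      (tokenGraph (starGraph n) k).Reachable A A' := by
    intro A
    by_cases h0 : 0 ∈ A.1
    · exact ⟨A, h0, SimpleGraph.Reachable.refl A⟩
    · obtain ⟨A', h1, h2⟩ := to_L0 hk1 A h0
      exact ⟨A', h1, h2.symm.reachable⟩
  intro A B
  obtain ⟨A', hA'0, hA'⟩ := lift A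
  obtain ⟨B', hB'0, hB'⟩ := lift B
  exact (hA'.trans (reachable_L0 B' hB'0 A' hA'0)).trans hB'.symm

lemma walk_parity (φ : tokenGraph (starGraph n) k ≃g tokenGraph (starGraph n) k)
    {A B : Vtx n k} (p : (tokenGraph (starGraph n) k).Walk A B) :
    ((0 ∈ A.1) ↔ (0 ∈ B.1)) ↔ ((0 ∈ (φ A).1) ↔ (0 ∈ (φ B).1)) := by
  induction p with
  | nil => simp
  | cons h p IH =>
    have h1 := adj_layers h
    have h2 := adj_layers (φ.map_adj_iff.2 h)
    tauto

lemma layer_global (hk1 : 1 ≤ k)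
    (φ : tokenGraph (starGraph n) k ≃g tokenGraph (starGraph n) k)
    {A₀ : Vtx n k} (h : 0 ∈ A₀.1 ↔ 0 ∈ (φ A₀).1) :
    ∀ A : Vtx n k, 0 ∈ A.1 ↔ 0 ∈ (φ A).1 := by
  intro A
  obtain ⟨p⟩ := preconn hk1 A₀ A
  have := walk_parity φ p
  tauto

lemma layer_global_swap (hk1 : 1 ≤ k)
    (φ : tokenGraph (starGraph n) k ≃g tokenGraph (starGraph n) k)
    {A₀ : Vtx n k} (h : ¬(0 ∈ A₀.1 ↔ 0 ∈ (φ A₀).1)) :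
    ∀ A : Vtx n k, 0 ∈ A.1 ↔ 0 ∉ (φ A).1 := by
  intro A
  obtain ⟨p⟩ := preconn hk1 A₀ A
  have := walk_parity φ p
  tauto


/-! ### Automorphisms from permutations and complementation -/

lemma zero_mem_image {σ : Equiv.Perm (Fin (n+1))} (hσ : σ 0 = 0) {s : Finset (Fin (n+1))} :
    0 ∈ s.image σ ↔ 0 ∈ s := by
  constructor
  · intro h
    obtain ⟨x, hx, hx0⟩ := Finset.mem_image.1 h
    have : x = 0 := σ.injective (by rw [hx0, hσ])
    exact this ▸ hx
  · intro h
    exact Finset.mem_image.2 ⟨0, h, hσ⟩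

lemma erase_image {σ : Equiv.Perm (Fin (n+1))} (hσ : σ 0 = 0) (s : Finset (Fin (n+1))) :
    (s.image σ).erase 0 = (s.erase 0).image σ := by
  conv_lhs => rw [← hσ]
  exact (Finset.image_erase σ.injective s 0).symm

/-- the automorphism of the token graph induced by a permutation fixing the center -/
def permIso (σ : Equiv.Perm (Fin (n+1))) (hσ : σ 0 = 0) :
    tokenGraph (starGraph n) k ≃g tokenGraph (starGraph n) k where
  toFun A := ⟨A.1.image σ, by rw [Finset.card_image_of_injective _ σ.injective, A.2]⟩
  invFun A := ⟨A.1.image σ.symm, by rw [Finset.card_image_of_injective _ σ.symm.injective, A.2]⟩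
  left_inv A := by
    apply Subtype.ext
    show (A.1.image σ).image σ.symm = A.1
    rw [Finset.image_image]
    simp
  right_inv A := by
    apply Subtype.ext
    show (A.1.image σ.symm).image σ = A.1
    rw [Finset.image_image]
    simp
  map_rel_iff' := by
    intro A B
    show (tokenGraph (starGraph n) k).Adj ⟨A.1.image σ, _⟩ ⟨B.1.image σ, _⟩ ↔ _
    rw [adj_iff, adj_iff]
    have h1 : ∀ s t : Finset (Fin (n+1)), (s.image σ).erase 0 ⊆ t.image σ ↔ s.erase 0 ⊆ t := by
      intro s t
      rw [erase_image hσ]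
      exact Finset.image_subset_image_iff σ.injective
    simp only [zero_mem_image hσ, h1]

lemma permIso_coe (σ : Equiv.Perm (Fin (n+1))) (hσ : σ 0 = 0) (A : Vtx n k) :
    ((permIso (k := k) σ hσ) A).1 = A.1.image σ := rfl

/-- the complementation automorphism, in the balanced case -/
def compIso (hbal : 2 * k = n + 1) :
    tokenGraph (starGraph n) k ≃g tokenGraph (starGraph n) k where
  toFun A := ⟨A.1ᶜ, by rw [Finset.card_compl, A.2, Fintype.card_fin]; omega⟩
  invFun A := ⟨A.1ᶜ, by rw [Finset.card_compl, A.2, Fintype.card_fin]; omega⟩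
  left_inv A := by apply Subtype.ext; simp
  right_inv A := by apply Subtype.ext; simp
  map_rel_iff' := by
    intro A B
    show (∃ a b, (starGraph n).Adj a b ∧ symmDiff A.1ᶜ B.1ᶜ = {a, b}) ↔ _
    rw [compl_symmDiff_compl]
    rfl

lemma compIso_coe (hbal : 2 * k = n + 1) (A : Vtx n k) :
    ((compIso hbal) A).1 = A.1ᶜ := rfl

/-! ### Cardinalities -/

lemma card_L0 {j : ℕ} : Nat.card {A : Vtx n (j+1) // 0 ∈ A.1} = n.choose j := by
  have e : {A : Vtx n (j+1) // 0 ∈ A.1} ≃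
      {s // s ∈ ((Finset.univ : Finset (Fin (n+1))).erase 0).powersetCard j} := by
    refine ⟨fun A => ⟨A.1.1.erase 0, ?_⟩, fun s => ⟨⟨insert 0 s.1, ?_⟩, Finset.mem_insert_self 0 _⟩,
      ?_, ?_⟩
    · rw [Finset.mem_powersetCard]
      refine ⟨fun x hx => Finset.mem_erase.2 ⟨(Finset.mem_erase.1 hx).1, Finset.mem_univ x⟩, ?_⟩
      rw [Finset.card_erase_of_mem A.2, A.1.2]
      omega
    · obtain ⟨hsub, hcard⟩ := Finset.mem_powersetCard.1 s.2
      rw [Finset.card_insert_of_notMem (fun h => (Finset.mem_erase.1 (hsub h)).1 rfl), hcard]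
    · intro A
      apply Subtype.ext
      apply Subtype.ext
      show insert 0 (A.1.1.erase 0) = A.1.1
      exact Finset.insert_erase A.2
    · intro s
      apply Subtype.ext
      show (insert 0 s.1).erase 0 = s.1
      obtain ⟨hsub, _⟩ := Finset.mem_powersetCard.1 s.2
      exact Finset.erase_insert (fun h => (Finset.mem_erase.1 (hsub h)).1 rfl)
  rw [Nat.card_congr e, Nat.card_eq_fintype_card, Fintype.card_coe, Finset.card_powersetCard,
    Finset.card_erase_of_mem (Finset.mem_univ 0), Finset.card_univ, Fintype.card_fin]
  norm_num

lemma card_L1 {j : ℕ} : Nat.card {A : Vtx n (j+1) // 0 ∉ A.1} = n.choose (j+1) := by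
  have e : {A : Vtx n (j+1) // 0 ∉ A.1} ≃
      {s // s ∈ ((Finset.univ : Finset (Fin (n+1))).erase 0).powersetCard (j+1)} := by
    refine ⟨fun A => ⟨A.1.1, ?_⟩, fun s => ⟨⟨s.1, ?_⟩, ?_⟩, ?_, ?_⟩
    · rw [Finset.mem_powersetCard]
      exact ⟨fun x hx => Finset.mem_erase.2 ⟨fun h => A.2 (h ▸ hx), Finset.mem_univ x⟩, A.1.2⟩
    · exact (Finset.mem_powersetCard.1 s.2).2
    · exact fun h => (Finset.mem_erase.1 ((Finset.mem_powersetCard.1 s.2).1 h)).1 rfl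
    · intro A; apply Subtype.ext; apply Subtype.ext; rfl
    · intro s; apply Subtype.ext; rfl
  rw [Nat.card_congr e, Nat.card_eq_fintype_card, Fintype.card_coe, Finset.card_powersetCard,
    Finset.card_erase_of_mem (Finset.mem_univ 0), Finset.card_univ, Fintype.card_fin]
  norm_num

lemma choose_strict {j : ℕ} (h : 2 * (j + 1) ≤ n) : n.choose j < n.choose (j+1) := by
  have h1 := Nat.choose_succ_right_eq n j
  have hpos : 0 < n.choose j := Nat.choose_pos (by omega)
  have h2 : n.choose j * (j + 1) < n.choose j * (n - j) := by
    apply Nat.mul_lt_mul_of_le_of_lt (le_refl _) (by omega) (by omega)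
  have h3 : n.choose j * (j+1) < n.choose (j+1) * (j+1) := by rw [h1]; exact h2
  exact Nat.lt_of_mul_lt_mul_right h3

lemma card_center_stab : Nat.card {σ : Equiv.Perm (Fin (n+1)) // σ 0 = 0} = n.factorial := by
  have e1 : {σ : Equiv.Perm (Fin (n+1)) // σ 0 = 0} ≃
      {σ : Equiv.Perm (Fin (n+1)) // ∀ a, ¬ a ≠ 0 → σ a = a} := by
    apply Equiv.subtypeEquivRight
    intro σ
    constructor
    · intro h a ha
      rw [not_not] at ha
      rw [ha, h]
    · intro h
      exact h 0 (by simp)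
  have e2 := (Equiv.Perm.subtypeEquivSubtypePerm (fun a : Fin (n+1) => a ≠ 0)).symm
  rw [Nat.card_congr (e1.trans e2), Nat.card_eq_fintype_card, Fintype.card_perm]
  congr 1
  rw [Fintype.card_subtype_compl, Fintype.card_fin, Fintype.card_subtype_eq]
  norm_num


/-! ### Putting it together -/

lemma permIso_inj {j : ℕ} (hn2 : 2*(j+1) ≤ n+1) {σ τ : Equiv.Perm (Fin (n+1))}
    (h : ∀ A : Vtx n (j+1), A.1.image σ = A.1.image τ) : σ = τ := by
  have key : ∀ x : Fin (n+1), x ≠ 0 → σ x = τ x := by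
    intro x hx
    have hcard : 2*j ≤ (((Finset.univ : Finset (Fin (n+1))).erase 0).erase x).card := by
      rw [Finset.card_erase_of_mem (Finset.mem_erase.2 ⟨hx, Finset.mem_univ x⟩),
        Finset.card_erase_of_mem (Finset.mem_univ 0), Finset.card_univ, Fintype.card_fin]
      omega
    obtain ⟨D, hDsub, hDcard⟩ := Finset.exists_subset_card_eq hcard
    obtain ⟨B, hBsub, hBcard⟩ := Finset.exists_subset_card_eq (show j ≤ D.card by omega)
    set C := D \ B with hC
    have hCcard : C.card = j := by
      rw [hC, Finset.card_sdiff_of_subset hBsub, hDcard, hBcard]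
      omega
    have hxD : x ∉ D := fun hxD => (Finset.mem_erase.1 (hDsub hxD)).1 rfl
    have hxB : x ∉ B := fun h' => hxD (hBsub h')
    have hxC : x ∉ C := fun h' => hxD ((Finset.sdiff_subset) h')
    have hA1card : (insert x B).card = j + 1 := by
      rw [Finset.card_insert_of_notMem hxB, hBcard]
    have hA2card : (insert x C).card = j + 1 := by
      rw [Finset.card_insert_of_notMem hxC, hCcard]
    have h1 := h ⟨insert x B, hA1card⟩
    have h2 := h ⟨insert x C, hA2card⟩
    simp only at h1 h2
    have hm1 : σ x ∈ (insert x B).image τ := by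
      rw [← h1]
      exact Finset.mem_image_of_mem σ (Finset.mem_insert_self x B)
    have hm2 : σ x ∈ (insert x C).image τ := by
      rw [← h2]
      exact Finset.mem_image_of_mem σ (Finset.mem_insert_self x C)
    obtain ⟨y, hy, hyx⟩ := Finset.mem_image.1 hm1
    obtain ⟨z, hz, hzx⟩ := Finset.mem_image.1 hm2
    have hyz : y = z := τ.injective (by rw [hyx, hzx])
    subst hyz
    rcases Finset.mem_insert.1 hy with rfl | hyB
    · exact hyx.symm
    · rcases Finset.mem_insert.1 hz with rfl | hzC
      · exact hyx.symm
      · exact absurd hzC (by rw [hC]; exact fun h' => (Finset.mem_sdiff.1 h').2 hyB)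
  apply Equiv.ext
  intro x
  by_cases hx : x = 0
  · subst hx
    have h0 : ∃ B₀ ⊆ (Finset.univ : Finset (Fin (n+1))).erase 0, B₀.card = j := by
      apply Finset.exists_subset_card_eq
      rw [Finset.card_erase_of_mem (Finset.mem_univ 0), Finset.card_univ, Fintype.card_fin]
      omega
    obtain ⟨B₀, hB₀sub, hB₀card⟩ := h0
    have h0B₀ : 0 ∉ B₀ := fun h' => (Finset.mem_erase.1 (hB₀sub h')).1 rfl
    have hA₀card : (insert 0 B₀).card = j + 1 := by
      rw [Finset.card_insert_of_notMem h0B₀, hB₀card]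
    have h1 := h ⟨insert 0 B₀, hA₀card⟩
    simp only at h1
    -- σ 0 is the unique element of image σ not of the form σ b for b ∈ B₀ ... easier:
    -- both sides are images; use key on all of B₀
    have : (insert 0 B₀).image σ = insert (σ 0) (B₀.image τ) := by
      rw [Finset.image_insert]
      congr 1
      apply Finset.image_congr
      intro b hb
      exact key b (fun h' => h0B₀ (h' ▸ hb))
    rw [this, Finset.image_insert] at h1
    -- h1 : insert (σ 0) (B₀.image τ) = insert (τ 0) (B₀.image τ)
    have hσ0 : σ 0 ∉ B₀.image τ := by
      intro hmem
      obtain ⟨b, hb, hbe⟩ := Finset.mem_image.1 hmem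
      have : σ b = σ 0 := by rw [key b (fun h' => h0B₀ (h' ▸ hb)), hbe]
      have : b = 0 := σ.injective this
      exact h0B₀ (this ▸ hb)
    have hτ0 : τ 0 ∉ B₀.image τ := by
      intro hmem
      obtain ⟨b, hb, hbe⟩ := Finset.mem_image.1 hmem
      have : b = 0 := τ.injective hbe
      exact h0B₀ (this ▸ hb)
    have : σ 0 ∈ insert (τ 0) (B₀.image τ) := h1 ▸ Finset.mem_insert_self _ _
    rcases Finset.mem_insert.1 this with h' | h'
    · exact h'
    · exact absurd h' hσ0
  · exact key x hx

lemma card_LP {j : ℕ} (hn2 : 2*(j+1) ≤ n+1) :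
    Nat.card {φ : tokenGraph (starGraph n) (j+1) ≃g tokenGraph (starGraph n) (j+1) //
      ∀ A : Vtx n (j+1), 0 ∈ A.1 ↔ 0 ∈ (φ A).1} = n.factorial := by
  rw [← card_center_stab (n := n)]
  apply Nat.card_congr
  symm
  refine Equiv.ofBijective (fun σ => ⟨permIso σ.1 σ.2,
    fun A => (zero_mem_image σ.2).symm⟩) ⟨?_, ?_⟩
  · intro σ τ h
    apply Subtype.ext
    apply permIso_inj hn2
    intro A
    have : (permIso (k := j+1) σ.1 σ.2) A = (permIso (k := j+1) τ.1 τ.2) A := by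
      have := congrArg (fun ψ => ψ.1 A) h
      exact this
    rw [← permIso_coe σ.1 σ.2 A, ← permIso_coe τ.1 τ.2 A, this]
  · rintro ⟨φ, hφ⟩
    obtain ⟨σ, hσ0, himg⟩ := classify hn2 φ hφ
    refine ⟨⟨σ, hσ0⟩, ?_⟩
    apply Subtype.ext
    apply RelIso.ext
    intro A
    apply Subtype.ext
    rw [permIso_coe, himg A]

end TokenStar

open TokenStar

/-- the number of automorphisms of F_k(K_{1,n}) is n! when
k ≠ (n+1)/2, and 2·n! when k = (n+1)/2. -/
theorem card_aut_token_graph_of_star (n k : ℕ)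
    (hn : 2 ≤ n) (hk1 : 1 ≤ k) (hk : 2 * k ≤ n + 1) :
    Nat.card (tokenGraph (starGraph n) k ≃g tokenGraph (starGraph n) k) =
      if 2 * k = n + 1 then 2 * n.factorial else n.factorial := by
  obtain ⟨j, rfl⟩ : ∃ j, k = j + 1 := ⟨k - 1, by omega⟩
  have hn2 : 2*(j+1) ≤ n+1 := hk
  -- a base vertex in layer L0
  have h0 : ∃ B₀ ⊆ (Finset.univ : Finset (Fin (n+1))).erase 0, B₀.card = j := by
    apply Finset.exists_subset_card_eq
    rw [Finset.card_erase_of_mem (Finset.mem_univ 0), Finset.card_univ, Fintype.card_fin]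
    omega
  obtain ⟨B₀, hB₀sub, hB₀card⟩ := h0
  have h0B₀ : 0 ∉ B₀ := fun h' => (Finset.mem_erase.1 (hB₀sub h')).1 rfl
  have hA₀card : (insert 0 B₀).card = j + 1 := by
    rw [Finset.card_insert_of_notMem h0B₀, hB₀card]
  set A₀ : Vtx n (j+1) := ⟨insert 0 B₀, hA₀card⟩ with hA₀
  have h0A₀ : 0 ∈ A₀.1 := Finset.mem_insert_self 0 B₀
  by_cases hbal : 2 * (j+1) = n + 1
  · rw [if_pos hbal]
    set c := compIso (n := n) (k := j+1) hbal with hc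
    set LPt := {φ : tokenGraph (starGraph n) (j+1) ≃g tokenGraph (starGraph n) (j+1) //
      ∀ A : Vtx n (j+1), 0 ∈ A.1 ↔ 0 ∈ (φ A).1} with hLPt
    have hF : ∀ p : LPt × Bool,
        (tokenGraph (starGraph n) (j+1) ≃g tokenGraph (starGraph n) (j+1)) := fun p =>
      if p.2 then p.1.1.trans c else p.1.1
    have e : LPt × Bool ≃ (tokenGraph (starGraph n) (j+1) ≃g tokenGraph (starGraph n) (j+1)) := by
      refine Equiv.ofBijective (fun p => if p.2 then p.1.1.trans c else p.1.1) ⟨?_, ?_⟩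
      · rintro ⟨ψ, b⟩ ⟨ψ', b'⟩ h
        simp only at h
        have hbb' : b = b' := by
          by_contra hne
          -- evaluate layer at A₀
          have layer : ∀ (χ : LPt) (bb : Bool),
              (0 ∈ (((if bb then χ.1.trans c else χ.1)) A₀).1 ↔ bb = false) := by
            intro χ bb
            cases bb
            · simpa using (χ.2 A₀).1 h0A₀
            · simp only [if_pos]
              constructor
              · intro hmem
                exfalso
                have h1 : (χ.1.trans c) A₀ = c (χ.1 A₀) := rfl
                rw [h1] at hmem
                rw [compIso_coe] at hmem
                exact (Finset.mem_compl.1 hmem) ((χ.2 A₀).1 h0A₀)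
              · intro hh; exact absurd hh (by simp)
          have l1 := layer ⟨ψ, (by exact ψ.2)⟩ b
          have l2 := layer ⟨ψ', (by exact ψ'.2)⟩ b'
          simp only at l1 l2
          rw [h] at l1
          rw [l2] at l1
          cases b <;> cases b' <;> simp_all
        subst hbb'
        cases b
        · simp only [if_neg (Bool.false_ne_true)] at h
          rw [Prod.ext_iff]
          exact ⟨Subtype.ext h, rfl⟩
        · simp only [if_pos] at h
          refine Prod.ext_iff.2 ⟨Subtype.ext ?_, rfl⟩
          apply RelIso.ext
          intro A
          have := congrArg (fun χ => χ A) h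
          have h1 : c (ψ.1 A) = c (ψ'.1 A) := this
          have h2 : (ψ.1 A).1ᶜ = (ψ'.1 A).1ᶜ := by
            rw [← compIso_coe hbal, ← compIso_coe hbal]
            exact Subtype.ext_iff.1 h1
          have h3 : (ψ.1 A).1 = (ψ'.1 A).1 := by
            rw [← compl_compl (ψ.1 A).1, h2, compl_compl]
          exact Subtype.ext h3
      · intro φ
        by_cases hbase : 0 ∈ (φ A₀).1
        · refine ⟨(⟨φ, layer_global (by omega) φ (iff_of_true h0A₀ hbase)⟩, false), ?_⟩
          simp
        · have hψbase : 0 ∈ ((φ.trans c) A₀).1 := by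
            have h1 : (φ.trans c) A₀ = c (φ A₀) := rfl
            rw [h1, compIso_coe]
            exact Finset.mem_compl.2 hbase
          refine ⟨(⟨φ.trans c, layer_global (by omega) (φ.trans c)
            (iff_of_true h0A₀ hψbase)⟩, true), ?_⟩
          simp only [if_pos]
          apply RelIso.ext
          intro A
          have h1 : ((φ.trans c).trans c) A = c (c (φ A)) := rfl
          rw [h1]
          apply Subtype.ext
          rw [compIso_coe, compIso_coe, compl_compl]
    rw [← Nat.card_congr e, Nat.card_prod, card_LP hn2, Nat.card_eq_fintype_card,
      Fintype.card_bool]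
    ring
  · rw [if_neg hbal]
    have hall : ∀ φ : tokenGraph (starGraph n) (j+1) ≃g tokenGraph (starGraph n) (j+1),
        ∀ A : Vtx n (j+1), 0 ∈ A.1 ↔ 0 ∈ (φ A).1 := by
      intro φ
      by_cases hbase : 0 ∈ (φ A₀).1
      · exact layer_global (by omega) φ (iff_of_true h0A₀ hbase)
      · exfalso
        have hsw := layer_global_swap (by omega) φ
          (A₀ := A₀) (by intro hiff; exact hbase (hiff.1 h0A₀))
        have hsw' : ∀ A : Vtx n (j+1), 0 ∉ A.1 → 0 ∈ (φ.symm A).1 := by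
          intro A hA
          have := hsw (φ.symm A)
          rw [φ.apply_symm_apply] at this
          tauto
        have e : {A : Vtx n (j+1) // 0 ∈ A.1} ≃ {A : Vtx n (j+1) // 0 ∉ A.1} := by
          refine ⟨fun A => ⟨φ A.1, (hsw A.1).1 A.2⟩, fun A => ⟨φ.symm A.1, hsw' A.1 A.2⟩, ?_, ?_⟩
          · intro A
            apply Subtype.ext
            exact φ.symm_apply_apply A.1
          · intro A
            apply Subtype.ext
            exact φ.apply_symm_apply A.1
        have hcc := Nat.card_congr e
        rw [card_L0, card_L1] at hcc
        have := choose_strict (n := n) (j := j) (by omega)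
        omega
    calc Nat.card (tokenGraph (starGraph n) (j+1) ≃g tokenGraph (starGraph n) (j+1))
        = Nat.card {φ : tokenGraph (starGraph n) (j+1) ≃g tokenGraph (starGraph n) (j+1) //
            ∀ A : Vtx n (j+1), 0 ∈ A.1 ↔ 0 ∈ (φ A).1} :=
          (Nat.card_congr (Equiv.subtypeUnivEquiv hall)).symm
    _ = n.factorial := card_LP hn2
end

section
/- Let G and H be isomorphic graphs on n ≥ 3 vertices, 1 ≤ k ≤ n−1, and ψ : F_k(H) → F_k(G) an isomorphism. Suppose f : V(H) → V(G) is a function such that for every vertex u of H, ψ(κ_H(u,k)) = κ_G(f(u),k), where κ(w,k) denotes the set of k-subsets containing w. Then f is injective (hence bijective), f is a graph isomorphism from H to G, and ψ = ι(f), i.e., ψ(A) = {f(v) : v ∈ A} for every k-subset A of V(H). -/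
open Finset

lemma adj_of_pair_eq' {α : Type*} [DecidableEq α] {G : SimpleGraph α} {a b c d : α}
    (h : G.Adj a b) (hcd : c ≠ d) (hp : ({a, b} : Finset α) = {c, d}) : G.Adj c d := by
  have hc : c ∈ ({a, b} : Finset α) := hp.symm ▸ Finset.mem_insert_self c {d}
  have hd : d ∈ ({a, b} : Finset α) := hp.symm ▸ (by simp : d ∈ ({c, d} : Finset α))
  simp only [Finset.mem_insert, Finset.mem_singleton] at hc hd
  rcases hc with rfl | rfl <;> rcases hd with rfl | rfl
  · exact absurd rfl hcd
  · exact h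
  · exact h.symm
  · exact absurd rfl hcd

lemma exists_token' {W : Type*} [Fintype W] [DecidableEq W] {k n : ℕ}
    (hnW : Fintype.card W = n) (hk1 : 1 ≤ k) (hk2 : k ≤ n - 1) {u v : W} (hne : u ≠ v) :
    ∃ A : Finset W, A.card = k ∧ u ∈ A ∧ v ∉ A := by
  have hcard : k ≤ ((Finset.univ : Finset W) \ {v}).card := by
    rw [Finset.card_sdiff_of_subset (by simp)]
    simpa [hnW] using hk2
  obtain ⟨A, h1, h2, h3⟩ := Finset.exists_subsuperset_card_eq (s := {u})
    (t := (Finset.univ : Finset W) \ {v}) (by simp [hne]) (by simpa using hk1) hcard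
  exact ⟨A, h3, h1 (Finset.mem_singleton_self u),
    fun h => (Finset.mem_sdiff.mp (h2 h)).2 (Finset.mem_singleton_self v)⟩

/-- Given adjacent-style pair, build two tokens with symmDiff {u,v}. -/
lemma exists_token_pair {W : Type*} [Fintype W] [DecidableEq W] {k n : ℕ}
    (hnW : Fintype.card W = n) (hk1 : 1 ≤ k) (hk2 : k ≤ n - 1) {u v : W} (hne : u ≠ v) :
    ∃ A B : Finset W, A.card = k ∧ B.card = k ∧ symmDiff A B = {u, v} := by
  obtain ⟨A, hAk, hu, hv⟩ := exists_token' hnW hk1 hk2 hne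
  refine ⟨A, insert v (A.erase u), hAk, ?_, ?_⟩
  · rw [Finset.card_insert_of_notMem (fun h => hv (Finset.mem_of_mem_erase h)),
      Finset.card_erase_of_mem hu, hAk]
    omega
  · ext x
    by_cases hx : x = u <;> by_cases hx' : x = v <;>
      simp_all [Finset.mem_symmDiff, hne, Ne.symm hne]

/-- if an isomorphism ψ : F_k(H) → F_k(G) maps, for every vertex
u of H, the k-sets containing u exactly onto the k-sets containing f(u), then
f is a bijection, a graph isomorphism from H to G, and ψ = ι(f). -/
theorem token_iso_is_induced
    {V W : Type*} [Fintype V] [DecidableEq V] [Fintype W] [DecidableEq W]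
    (G : SimpleGraph V) (H : SimpleGraph W) (n k : ℕ)
    (hnV : Fintype.card V = n) (hnW : Fintype.card W = n) (hn3 : 3 ≤ n)
    (hk1 : 1 ≤ k) (hk2 : k ≤ n - 1)
    (e : H ≃g G)
    (ψ : tokenGraph H k ≃g tokenGraph G k) (f : W → V)
    (hf : ∀ (u : W) (A : {s : Finset W // s.card = k}),
      u ∈ A.1 ↔ f u ∈ (ψ A).1) :
    Function.Bijective f ∧
    (∀ u v : W, H.Adj u v ↔ G.Adj (f u) (f v)) ∧
    (∀ A : {s : Finset W // s.card = k}, (ψ A).1 = A.1.image f) := by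
  have hinj : Function.Injective f := by
    intro u v huv
    by_contra hne
    obtain ⟨A, hAk, hu, hv⟩ := exists_token' hnW hk1 hk2 hne
    have h1 := (hf u ⟨A, hAk⟩).mp hu
    rw [huv] at h1
    exact hv ((hf v ⟨A, hAk⟩).mpr h1)
  have hbij : Function.Bijective f := by
    rw [Fintype.bijective_iff_injective_and_card, hnV, hnW]
    exact ⟨hinj, rfl⟩
  have himg : ∀ A : {s : Finset W // s.card = k}, (ψ A).1 = A.1.image f := by
    intro A
    refine (Finset.eq_of_subset_of_card_le ?_ ?_).symm
    · intro x hx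
      obtain ⟨u, hu, rfl⟩ := Finset.mem_image.mp hx
      exact (hf u A).mp hu
    · rw [Finset.card_image_of_injective _ hinj, A.2, (ψ A).2]
  refine ⟨hbij, ?_, himg⟩
  intro u v
  constructor
  · intro huv
    obtain ⟨A, B, hAk, hBk, hsd⟩ := exists_token_pair hnW hk1 hk2 huv.ne
    have hadj : (tokenGraph H k).Adj ⟨A, hAk⟩ ⟨B, hBk⟩ := ⟨u, v, huv, hsd⟩
    obtain ⟨a, b, hab, hsd'⟩ := ψ.map_rel_iff.mpr hadj
    rw [himg, himg] at hsd'
    rw [← Finset.image_symmDiff _ _ hinj, hsd] at hsd'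
    simp only [Finset.image_insert, Finset.image_singleton] at hsd'
    exact adj_of_pair_eq' hab (fun h => huv.ne (hinj h)) hsd'.symm
  · intro huv
    have hne : u ≠ v := fun h => huv.ne (by rw [h])
    obtain ⟨A, B, hAk, hBk, hsd⟩ := exists_token_pair hnW hk1 hk2 hne
    have hadj : (tokenGraph G k).Adj (ψ ⟨A, hAk⟩) (ψ ⟨B, hBk⟩) := by
      refine ⟨f u, f v, huv, ?_⟩
      rw [himg, himg, ← Finset.image_symmDiff _ _ hinj, hsd]
      simp
    obtain ⟨a, b, hab, hsd'⟩ := ψ.map_rel_iff.mp hadj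
    rw [hsd] at hsd'
    exact adj_of_pair_eq' hab hne hsd'.symm
end
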